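/- For every real number p > 1, the infinite product ∏_{i=1}^∞ (1 − (2i)^{-p})^{-1} converges and ∑_{γ ∈ 𝓘} (2ℕ)^{-pγ} = ∏_{i=1}^∞ (1 − (2i)^{-p})^{-1}. -/

import Mathlib

/-- The set of multi-indices `𝓘`: finitely supported sequences of nonnegative integers.
We index from `0`, so the classical `i`-th entry (`i ≥ 1`) corresponds to `γ (i-1)`,
and the weight `(2ℕ)^{rγ} = ∏_{i=1}^∞ (2i)^{r γ_i}` becomes a finite product over the
support of `γ`. -/
noncomputable def kondratievWeight (r : ℝ) (γ : ℕ →₀ ℕ) : ℝ :=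
  ∏ i ∈ γ.support, ((2 * (i + 1) : ℝ)) ^ (r * (γ i : ℝ))

section aux

variable (p : ℝ)

/-- Abbreviation for the factor `(2(i+1))^{-p}`. -/
noncomputable def kwA (i : ℕ) : ℝ := ((2 * (i + 1) : ℝ)) ^ (-p)

lemma kwA_pos (i : ℕ) : 0 < kwA p i :=
  Real.rpow_pos_of_pos (by positivity) _

lemma kwA_lt_one (hp : 1 < p) (i : ℕ) : kwA p i < 1 :=
  Real.rpow_lt_one_of_one_lt_of_neg (by nlinarith [(Nat.cast_nonneg i : (0:ℝ) ≤ i)])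
    (by linarith)

/-- The weight as a `Finsupp.prod`. -/
lemma kondratievWeight_eq (γ : ℕ →₀ ℕ) :
    kondratievWeight (-p) γ = γ.prod fun i n => kwA p i ^ n := by
  unfold kondratievWeight Finsupp.prod kwA
  refine Finset.prod_congr rfl fun i _ => ?_
  show ((2 * ((i:ℝ) + 1))) ^ (-p * (γ i : ℝ)) = (((2 * ((i:ℝ) + 1))) ^ (-p)) ^ (γ i)
  rw [← Real.rpow_natCast (((2 * ((i:ℝ) + 1))) ^ (-p)) (γ i), ← Real.rpow_mul (by positivity)]

lemma kwW_nonneg (γ : ℕ →₀ ℕ) : 0 ≤ γ.prod fun i n => kwA p i ^ n :=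
  Finset.prod_nonneg fun i _ => pow_nonneg (kwA_pos p i).le _

/-- The splitting equivalence. -/
noncomputable def kwEquiv (j : ℕ) (s : Finset ℕ) (hj : j ∉ s) :
    ℕ × {γ : ℕ →₀ ℕ // γ.support ⊆ s} ≃ {γ : ℕ →₀ ℕ // γ.support ⊆ insert j s} where
  toFun x := ⟨Finsupp.single j x.1 + (x.2 : ℕ →₀ ℕ), by
    refine (Finsupp.support_add).trans ?_
    refine Finset.union_subset (Finset.Subset.trans Finsupp.support_single_subset ?_)
      (Finset.Subset.trans x.2.2 (Finset.subset_insert _ _))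
    simp⟩
  invFun γ := ((γ : ℕ →₀ ℕ) j, ⟨(γ : ℕ →₀ ℕ).erase j, by
    rw [Finsupp.support_erase]
    intro i hi
    rcases Finset.mem_erase.mp hi with ⟨hij, hi'⟩
    rcases Finset.mem_insert.mp (γ.2 hi') with h | h
    · exact absurd h hij
    · exact h⟩)
  left_inv := by
    rintro ⟨n, δ, hδ⟩
    have hδj : (δ : ℕ →₀ ℕ) j = 0 := by
      by_contra h
      exact hj (hδ (Finsupp.mem_support_iff.mpr h))
    ext
    · simp [hδj]
    · simp only
      rw [Finsupp.erase_add, Finsupp.erase_single,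
        Finsupp.erase_of_notMem_support (by simp [Finsupp.mem_support_iff, hδj]),
        zero_add]
  right_inv := by
    rintro ⟨γ, hγ⟩
    exact Subtype.ext (Finsupp.single_add_erase j γ)

lemma kwEquiv_apply (j : ℕ) (s : Finset ℕ) (hj : j ∉ s)
    (x : ℕ × {γ : ℕ →₀ ℕ // γ.support ⊆ s}) :
    ((kwEquiv j s hj x : {γ : ℕ →₀ ℕ // γ.support ⊆ insert j s}) : ℕ →₀ ℕ)
      = Finsupp.single j x.1 + (x.2 : ℕ →₀ ℕ) := rfl

set_option maxHeartbeats 400000 in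
/-- Finite-stage identity. -/
lemma hasSum_kw_finset (hp : 1 < p) (s : Finset ℕ) :
    HasSum (fun γ : {γ : ℕ →₀ ℕ // γ.support ⊆ s} => (γ : ℕ →₀ ℕ).prod fun i n => kwA p i ^ n)
      (∏ i ∈ s, (1 - kwA p i)⁻¹) := by
  classical
  induction s using Finset.induction_on with
  | empty =>
      rw [Finset.prod_empty]
      have h0 : ((0 : ℕ →₀ ℕ)).support ⊆ (∅ : Finset ℕ) := by simp
      have := hasSum_single (f := fun γ : {γ : ℕ →₀ ℕ // γ.support ⊆ (∅ : Finset ℕ)} =>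
        (γ : ℕ →₀ ℕ).prod fun i n => kwA p i ^ n) ⟨0, h0⟩ ?_
      · simpa using this
      · rintro ⟨γ, hγ⟩ hne
        exact absurd (Subtype.ext (Finsupp.support_eq_empty.mp (Finset.subset_empty.mp hγ))) hne
  | @insert j s hj ih =>
      have hgeom : HasSum (fun n : ℕ => kwA p j ^ n) (1 - kwA p j)⁻¹ :=
        hasSum_geometric_of_lt_one (kwA_pos p j).le (kwA_lt_one p hp j)
      have hs1 : Summable (fun n : ℕ => kwA p j ^ n) := ⟨_, hgeom⟩
      have hs2 : Summable (fun γ : {γ : ℕ →₀ ℕ // γ.support ⊆ s} =>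
          (γ : ℕ →₀ ℕ).prod fun i n => kwA p i ^ n) := ⟨_, ih⟩
      have hsm := Summable.mul_of_nonneg hs1 hs2
        (fun n => pow_nonneg (kwA_pos p j).le n) (fun γ => kwW_nonneg p γ.1)
      have hmul := hgeom.mul ih hsm
      rw [Finset.prod_insert hj]
      -- transfer along the equivalence
      rw [← Equiv.hasSum_iff (kwEquiv j s hj)]
      have hcomp : ((fun γ : {γ : ℕ →₀ ℕ // γ.support ⊆ insert j s} =>
            (γ : ℕ →₀ ℕ).prod fun i k => kwA p i ^ k) ∘ (kwEquiv j s hj))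
          = fun x : ℕ × {γ : ℕ →₀ ℕ // γ.support ⊆ s} =>
            kwA p j ^ x.1 * (x.2 : ℕ →₀ ℕ).prod fun i k => kwA p i ^ k := by
        funext x
        rcases x with ⟨n, δ, hδ⟩
        simp only [Function.comp_apply]
        rw [congrArg (fun γ : ℕ →₀ ℕ => γ.prod fun i k => kwA p i ^ k)
          (kwEquiv_apply j s hj (n, ⟨δ, hδ⟩))]
        show (Finsupp.single j n + δ).prod (fun i k => kwA p i ^ k)
          = kwA p j ^ n * δ.prod fun i k => kwA p i ^ k
        rw [Finsupp.prod_add_index' (fun i => pow_zero _) (fun i m k => pow_add _ _ _)]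
        congr 1
        exact Finsupp.prod_single_index (pow_zero _)
      rw [hcomp]
      exact hmul

end aux

/-- for `p > 1`, the infinite product `∏_{i=1}^∞ (1 − (2i)^{-p})^{-1}`
converges and equals `∑_{γ ∈ 𝓘} (2ℕ)^{-pγ}`. -/
theorem tsum_kondratievWeight_eq_tprod (p : ℝ) (hp : 1 < p) :
    Multipliable (fun i : ℕ => (1 - ((2 * (i + 1) : ℝ)) ^ (-p))⁻¹) ∧
      ∑' γ : ℕ →₀ ℕ, kondratievWeight (-p) γ =
        ∏' i : ℕ, (1 - ((2 * (i + 1) : ℝ)) ^ (-p))⁻¹ := by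
  classical
  set a : ℕ → ℝ := kwA p with ha
  set w : (ℕ →₀ ℕ) → ℝ := fun γ => γ.prod fun i n => a i ^ n with hw
  have hwnn : ∀ γ, 0 ≤ w γ := fun γ => kwW_nonneg p γ
  have ha1 : ∀ i, a i < 1 := kwA_lt_one p hp
  have ha0 : ∀ i, 0 < a i := kwA_pos p
  have hfacpos : ∀ i, 0 < (1 - a i)⁻¹ := fun i =>
    inv_pos.mpr (by linarith [ha1 i])
  have hfac1 : ∀ i, 1 ≤ (1 - a i)⁻¹ := fun i =>
    one_le_inv_iff₀.mpr ⟨by linarith [ha1 i], by linarith [ha0 i]⟩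
  -- summability of a
  have hsa : Summable a := by
    have h1 : Summable (fun n : ℕ => ((n : ℝ) + 1) ^ (-p)) := by
      have := (summable_nat_add_iff (f := fun n : ℕ => (n : ℝ) ^ (-p)) 1).mpr
        (Real.summable_nat_rpow.mpr (by linarith))
      simpa using this
    refine Summable.of_nonneg_of_le (fun i => (ha0 i).le) (fun i => ?_) h1
    exact Real.rpow_le_rpow_of_nonpos (by positivity) (by nlinarith [(Nat.cast_nonneg i : (0:ℝ) ≤ i)]) (by linarith)
  -- multipliable via exp/log
  have hslog : Summable fun i => Real.log (1 - a i)⁻¹ := by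
    refine Summable.of_nonneg_of_le (fun i => Real.log_nonneg (hfac1 i)) (fun i => ?_)
      (hsa.mul_left 2)
    have h2 : a i ≤ 2⁻¹ := by
      have : a i ≤ (2 : ℝ) ^ (-p) := by
        refine Real.rpow_le_rpow_of_nonpos (by norm_num) (by nlinarith [(Nat.cast_nonneg i : (0:ℝ) ≤ i)]) (by linarith)
      calc a i ≤ (2 : ℝ) ^ (-p) := this
        _ ≤ (2 : ℝ) ^ (-1 : ℝ) := Real.rpow_le_rpow_of_exponent_le (by norm_num) (by linarith)
        _ = 2⁻¹ := by rw [Real.rpow_neg_one]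
    have hpos : 0 < 1 - a i := by linarith [ha1 i]
    calc Real.log (1 - a i)⁻¹ ≤ (1 - a i)⁻¹ - 1 :=
          Real.log_le_sub_one_of_pos (hfacpos i)
      _ = a i / (1 - a i) := by field_simp; ring
      _ ≤ a i / 2⁻¹ := by
          apply div_le_div_of_nonneg_left (ha0 i).le (by norm_num)
          linarith
      _ = 2 * a i := by ring
  have hM : Multipliable fun i => (1 - a i)⁻¹ := by
    have h2 : (fun i => (1 - a i)⁻¹) = Real.exp ∘ fun i => Real.log (1 - a i)⁻¹ :=
      funext fun i => (Real.exp_log (hfacpos i)).symm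
    exact ⟨Real.exp (∑' i, Real.log (1 - a i)⁻¹), h2 ▸ hslog.hasSum.rexp⟩
  set P := ∏' i, (1 - a i)⁻¹ with hP
  have hProd : HasProd (fun i => (1 - a i)⁻¹) P := hM.hasProd
  -- every finite sum of w is ≤ P
  have hkey : ∀ T : Finset (ℕ →₀ ℕ), ∑ γ ∈ T, w γ ≤ P := by
    intro T
    set s : Finset ℕ := T.sup fun γ => γ.support with hs
    refine ge_of_tendsto hProd ?_
    filter_upwards [Filter.eventually_ge_atTop s] with t hst
    have hsum := hasSum_kw_finset p hp t
    have hTsub : ∀ γ ∈ T, γ.support ⊆ t := fun γ hγ =>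
      (Finset.le_sup (f := fun γ : ℕ →₀ ℕ => γ.support) hγ).trans hst
    -- embed T into the subtype
    have hTeq : ∑ γ ∈ T, w γ = ∑' x : {γ : ℕ →₀ ℕ // γ ∈ T}, w x.1 :=
      (Finset.tsum_subtype T w).symm
    rw [hTeq]
    calc _ ≤ ∑' x : {γ : ℕ →₀ ℕ // γ.support ⊆ t}, w x.1 := by
          refine Summable.tsum_le_tsum_of_inj
            (fun x => (⟨x.1, hTsub x.1 x.2⟩ : {γ : ℕ →₀ ℕ // γ.support ⊆ t}))
            (fun x y h => Subtype.ext (by simpa using congrArg Subtype.val h))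
            (fun c _ => hwnn _) (fun x => le_rfl) (Summable.of_finite) ⟨_, hsum⟩
      _ = ∏ i ∈ t, (1 - a i)⁻¹ := hsum.tsum_eq
  have hSw : Summable w := summable_of_sum_le (fun γ => hwnn γ) hkey
  have hSle : ∑' γ, w γ ≤ P := Summable.tsum_le_of_sum_le hSw hkey
  have hPle : P ≤ ∑' γ, w γ := by
    refine le_of_tendsto' hProd fun t => ?_
    have hsum := hasSum_kw_finset p hp t
    rw [← hsum.tsum_eq]
    exact Summable.tsum_le_tsum_of_inj (fun x => x.1) Subtype.coe_injective
      (fun γ _ => hwnn γ) (fun x => le_rfl) ⟨_, hsum⟩ hSw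
  have heq : ∑' γ : ℕ →₀ ℕ, kondratievWeight (-p) γ = P := by
    rw [tsum_congr fun γ => kondratievWeight_eq p γ]
    exact le_antisymm hSle hPle
  exact ⟨hM, heq⟩
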